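/- For every integer n ≥ 2 there exists a bipartite multigraph G with parts A and B that is the union of 2n − 2 matchings, each of size n, containing no rainbow matching of size n. (One may take A and B to be the two color classes of a cycle on 2n vertices: n − 1 of the matchings equal one perfect matching of the cycle and the remaining n − 1 matchings equal the other perfect matching.) -/

import Mathlib

/-- A set of edges of a bipartite multigraph with parts `A` and `B` is a matching
if any two distinct edges differ in both coordinates. -/
def IsMatching {A B : Type*} (S : Finset (A × B)) : Prop :=
  ∀ e ∈ S, ∀ f ∈ S, e ≠ f → e.1 ≠ f.1 ∧ e.2 ≠ f.2

/-- Given matchings `M 0, …, M (N-1)`, a rainbow matching of size `s` consists of `s`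
edges coming from pairwise distinct matchings, any two of which differ in both
coordinates. -/
def HasRainbowMatching {A B : Type*} {N : ℕ} (M : Fin N → Finset (A × B)) (s : ℕ) : Prop :=
  ∃ (c : Fin s → Fin N) (e : Fin s → A × B),
    Function.Injective c ∧ (∀ i, e i ∈ M (c i)) ∧
      ∀ i j, i ≠ j → (e i).1 ≠ (e j).1 ∧ (e i).2 ≠ (e j).2

/-- Sharpness of Drisko's theorem: for every `n ≥ 2` there is a bipartite multigraph
that is the union of `2n - 2` matchings of size `n` and has no rainbow matching of
size `n`. -/
theorem drisko_sharp (n : ℕ) (hn : 2 ≤ n) :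
    ∃ (A B : Type) (M : Fin (2 * n - 2) → Finset (A × B)),
      (∀ i, (M i).card = n) ∧ (∀ i, IsMatching (M i)) ∧
        ¬ HasRainbowMatching M n := by
  haveI : NeZero n := ⟨by omega⟩
  refine ⟨ZMod n, ZMod n,
    fun i => if (i : ℕ) < n - 1 then Finset.univ.image (fun x : ZMod n => (x, x))
      else Finset.univ.image (fun x : ZMod n => (x, x + 1)), ?_, ?_, ?_⟩
  · intro i
    beta_reduce
    split
    · rw [Finset.card_image_of_injective _ (fun a b h => (Prod.mk.injEq _ _ _ _ ▸ h).1)]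
      simp [ZMod.card]
    · rw [Finset.card_image_of_injective _ (fun a b h => (Prod.mk.injEq _ _ _ _ ▸ h).1)]
      simp [ZMod.card]
  · intro i
    intro e he f hf hne
    beta_reduce at he hf
    split at he <;> split at hf <;> simp_all <;>
      obtain ⟨x, hx⟩ := he <;> obtain ⟨y, hy⟩ := hf <;> subst hx <;> subst hy <;>
        simp_all <;> intro h <;> simp_all
  · rintro ⟨c, e, hc, hm, hd⟩
    -- first coordinates form a bijection, second coordinates form a bijection
    have hf : Function.Injective (fun i => (e i).1) := by
      intro i j h
      by_contra hij
      exact (hd i j hij).1 h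
    have hg : Function.Injective (fun i => (e i).2) := by
      intro i j h
      by_contra hij
      exact (hd i j hij).2 h
    have hcard : Fintype.card (Fin n) = Fintype.card (ZMod n) := by simp [ZMod.card]
    have hfb : Function.Bijective (fun i => (e i).1) :=
      (Fintype.bijective_iff_injective_and_card _).2 ⟨hf, hcard⟩
    have hgb : Function.Bijective (fun i => (e i).2) :=
      (Fintype.bijective_iff_injective_and_card _).2 ⟨hg, hcard⟩
    have hsf : ∑ i, (e i).1 = ∑ x : ZMod n, x :=
      Fintype.sum_bijective _ hfb _ _ (fun _ => rfl)
    have hsg : ∑ i, (e i).2 = ∑ x : ZMod n, x :=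
      Fintype.sum_bijective _ hgb _ _ (fun _ => rfl)
    -- classify edges
    have key : ∀ i, (e i).2 = (e i).1 + (if (c i : ℕ) < n - 1 then 0 else 1) := by
      intro i
      have hmi := hm i
      beta_reduce at hmi
      rcases lt_or_ge (c i : ℕ) (n - 1) with h | h
      · rw [if_pos h]
        rw [if_pos h, Finset.mem_image] at hmi
        obtain ⟨x, -, hx⟩ := hmi
        rw [← hx]
        simp
      · rw [if_neg (not_lt.2 h)]
        rw [if_neg (not_lt.2 h), Finset.mem_image] at hmi
        obtain ⟨x, -, hx⟩ := hmi
        rw [← hx]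
    set T : Finset (Fin n) := Finset.univ.filter (fun i => ¬ (c i : ℕ) < n - 1) with hT
    -- sum comparison gives (T.card : ZMod n) = 0
    have hsum : ∑ i, (e i).2 = ∑ i, (e i).1 + (T.card : ZMod n) := by
      calc ∑ i, (e i).2
          = ∑ i, ((e i).1 + (if (c i : ℕ) < n - 1 then 0 else 1)) := by
            exact Finset.sum_congr rfl (fun i _ => key i)
        _ = ∑ i, (e i).1 + ∑ i, (if (c i : ℕ) < n - 1 then (0 : ZMod n) else 1) := by
            rw [Finset.sum_add_distrib]
        _ = ∑ i, (e i).1 + (T.card : ZMod n) := by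
            congr 1
            rw [Finset.sum_ite, Finset.sum_const, Finset.sum_const]
            simp [hT, Finset.filter_not]
    have hzero : (T.card : ZMod n) = 0 := by
      rw [hsf, hsg] at hsum
      exact (left_eq_add.mp hsum)
    have hdvd : n ∣ T.card := (ZMod.natCast_eq_zero_iff _ _).1 hzero
    -- bounds on T.card
    have hub : T.card ≤ n - 1 := by
      have : T.card ≤ (Finset.range (n - 1)).card := by
        apply Finset.card_le_card_of_injOn (fun i => (c i : ℕ) - (n - 1))
        · intro i hi
          simp only [hT, Finset.mem_coe, Finset.mem_filter] at hi
          obtain ⟨-, hi⟩ := hi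
          have h1 : (c i : ℕ) < 2 * n - 2 := (c i).isLt
          simp only [Finset.mem_coe, Finset.mem_range]
          omega
        · intro i hi j hj h
          simp only [hT, Finset.mem_coe, Finset.mem_filter] at hi hj
          obtain ⟨-, hi⟩ := hi
          obtain ⟨-, hj⟩ := hj
          beta_reduce at h
          have h1 : (c i : ℕ) < 2 * n - 2 := (c i).isLt
          have h2 : (c j : ℕ) < 2 * n - 2 := (c j).isLt
          have : (c i : ℕ) = (c j : ℕ) := by omega
          exact hc (Fin.val_injective this)
      simpa using this
    have hlb : 1 ≤ T.card := by
      by_contra h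
      have hT0 : T = ∅ := by
        rw [← Finset.card_eq_zero]; omega
      have hall : ∀ i : Fin n, (c i : ℕ) < n - 1 := by
        intro i
        by_contra hi
        have : i ∈ T := Finset.mem_filter.2 ⟨Finset.mem_univ _, hi⟩
        simp [hT0] at this
      have : (Finset.univ : Finset (Fin n)).card ≤ (Finset.range (n - 1)).card := by
        apply Finset.card_le_card_of_injOn (fun i => (c i : ℕ))
        · intro i _
          simp [hall i]
        · intro i _ j _ h
          beta_reduce at h
          exact hc (Fin.val_injective h)
      simp at this
      omega
    have : n ≤ T.card := Nat.le_of_dvd (by omega) hdvd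
    omega
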